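/- There is at most one prime p such that v_p(k+1) ≥ v_p(B_k) ≥ 1, where B_k = lcm_{1 ≤ i ≤ k}{ i(a^2 i^2 - D) } and D ≠ a^2 i^2 for all 1 ≤ i ≤ k. (This follows since v_p(B_k) ≥ v_p(lcm(1,...,k)) for every prime p ≤ k, together with the Farhi–Kane result that at most one prime p ≤ k satisfies v_p(k+1) ≥ v_p(lcm(1,...,k)) ≥ 1.) -/

import Mathlib

/-- There is at most one prime `p` with `v_p(k+1) ≥ v_p(B_k) ≥ 1`, where
`B_k = lcm_{1 ≤ i ≤ k}{i(a²i² - D)}` and `D ≠ a²i²` for all `1 ≤ i ≤ k`. -/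
theorem at_most_one_prime (a D : ℤ) (ha : 1 ≤ a) (k : ℕ) (hk : 1 ≤ k)
    (hD : ∀ i : ℕ, 1 ≤ i → i ≤ k → D ≠ a^2 * (i : ℤ)^2)
    (p q : ℕ) (hp : p.Prime) (hq : q.Prime)
    (hp1 : 1 ≤ (((Finset.Icc 1 k).lcm
        (fun i : ℕ => (i : ℤ) * (a^2 * (i : ℤ)^2 - D))).natAbs.factorization p))
    (hp2 : (((Finset.Icc 1 k).lcm
        (fun i : ℕ => (i : ℤ) * (a^2 * (i : ℤ)^2 - D))).natAbs.factorization p)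
        ≤ (k+1).factorization p)
    (hq1 : 1 ≤ (((Finset.Icc 1 k).lcm
        (fun i : ℕ => (i : ℤ) * (a^2 * (i : ℤ)^2 - D))).natAbs.factorization q))
    (hq2 : (((Finset.Icc 1 k).lcm
        (fun i : ℕ => (i : ℤ) * (a^2 * (i : ℤ)^2 - D))).natAbs.factorization q)
        ≤ (k+1).factorization q) :
    p = q := by
  set f : ℕ → ℤ := fun i : ℕ => (i : ℤ) * (a^2 * (i : ℤ)^2 - D) with hf
  set B : ℕ := ((Finset.Icc 1 k).lcm f).natAbs with hB
  have hk1 : (0:ℕ) < k + 1 := by omega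
  -- B ≠ 0
  have hLne : (Finset.Icc 1 k).lcm f ≠ 0 := by
    intro h
    rw [Finset.lcm_eq_zero_iff] at h
    obtain ⟨i, hi, h0⟩ := h
    simp only [Finset.coe_Icc, Set.mem_Icc, Finset.mem_Icc] at hi
    rcases mul_eq_zero.mp h0 with h | h
    · have : i = 0 := by exact_mod_cast h
      omega
    · exact hD i hi.1 hi.2 (by linarith [sub_eq_zero.mp h])
  have hBne : B ≠ 0 := Int.natAbs_ne_zero.mpr hLne
  -- each per-prime consequence
  have key : ∀ r : ℕ, r.Prime →
      1 ≤ B.factorization r → B.factorization r ≤ (k+1).factorization r →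
      r ∣ k + 1 ∧ (r ≤ k → r ^ (Nat.log r k) ∣ (k + 1)) := by
    intro r hr h1 h2
    have hdk1 : r ∣ k + 1 :=
      (Nat.Prime.dvd_iff_one_le_factorization hr (by omega)).mpr (le_trans h1 h2)
    refine ⟨hdk1, fun hrk => ?_⟩
    set α := Nat.log r k with hα
    have hpowle : r ^ α ≤ k := Nat.pow_log_le_self r (by omega)
    have hmem : r ^ α ∈ Finset.Icc 1 k := by
      simp only [Finset.mem_Icc]
      exact ⟨Nat.one_le_pow _ _ hr.pos, hpowle⟩
    have hdvdf : ((r ^ α : ℕ) : ℤ) ∣ f (r ^ α) := by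
      simp only [hf]
      exact dvd_mul_right _ _
    have hdvdL : ((r ^ α : ℕ) : ℤ) ∣ (Finset.Icc 1 k).lcm f :=
      dvd_trans hdvdf (Finset.dvd_lcm hmem)
    have hdvdB : r ^ α ∣ B := by
      have := Int.natAbs_dvd_natAbs.mpr hdvdL
      simpa only [Int.natAbs_natCast, hB] using this
    have hle : α ≤ B.factorization r :=
      (Nat.Prime.pow_dvd_iff_le_factorization hr hBne).mp hdvdB
    exact (Nat.Prime.pow_dvd_iff_le_factorization hr (by omega)).mpr (le_trans hle h2)
  obtain ⟨hpd, hpd2⟩ := key p hp hp1 hp2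
  obtain ⟨hqd, hqd2⟩ := key q hq hq1 hq2
  by_contra hne
  -- if one of them equals k+1, the other divides it, hence equals it
  have hple : p ≤ k + 1 := Nat.le_of_dvd hk1 hpd
  have hqle : q ≤ k + 1 := Nat.le_of_dvd hk1 hqd
  rcases eq_or_lt_of_le hple with hpk | hpk
  · exact hne ((Nat.prime_dvd_prime_iff_eq hq hp).mp (hpk ▸ hqd)).symm
  rcases eq_or_lt_of_le hqle with hqk | hqk
  · exact hne ((Nat.prime_dvd_prime_iff_eq hp hq).mp (hqk ▸ hpd))
  have hpk' : p ≤ k := by omega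
  have hqk' : q ≤ k := by omega
  have hpd3 := hpd2 hpk'
  have hqd3 := hqd2 hqk'
  -- symmetric core argument
  have main : ∀ r s : ℕ, r.Prime → s.Prime → r ≠ s → r ≤ k → s ≤ k →
      r ^ (Nat.log r k) ∣ (k + 1) → s ^ (Nat.log s k) ∣ (k + 1) →
      r ^ (Nat.log r k) ≤ s ^ (Nat.log s k) → False := by
    intro r s hr hs hrs hrk hsk hrd hsd hle
    have hα : 1 ≤ Nat.log r k := Nat.log_pos hr.one_lt hrk
    have hβ : 1 ≤ Nat.log s k := Nat.log_pos hs.one_lt hsk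
    have hrle : r ≤ r ^ Nat.log r k := by
      calc r = r ^ 1 := (pow_one r).symm
      _ ≤ r ^ Nat.log r k := Nat.pow_le_pow_right hr.pos hα
    have hcop : Nat.Coprime (r ^ Nat.log r k) (s ^ Nat.log s k) :=
      Nat.Coprime.pow _ _ ((Nat.coprime_primes hr hs).mpr hrs)
    have hmul : r ^ Nat.log r k * s ^ Nat.log s k ∣ k + 1 :=
      hcop.mul_dvd_of_dvd_of_dvd hrd hsd
    have hle2 : r ^ Nat.log r k * s ^ Nat.log s k ≤ k + 1 := Nat.le_of_dvd hk1 hmul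
    have h1 : k < r ^ Nat.log r k * r := by
      have := Nat.lt_pow_succ_log_self hr.one_lt k
      rwa [pow_succ] at this
    have h2 : r ^ Nat.log r k * r ≤ r ^ Nat.log r k * s ^ Nat.log s k :=
      Nat.mul_le_mul_left _ (le_trans hrle hle)
    have heq : r ^ Nat.log r k * r = k + 1 := by omega
    have hsdvd : s ∣ r ^ (Nat.log r k + 1) := by
      rw [pow_succ, heq]
      exact dvd_trans (dvd_pow_self s (by omega)) hsd
    exact hrs ((Nat.prime_dvd_prime_iff_eq hs hr).mp (hs.dvd_of_dvd_pow hsdvd)).symm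
  rcases le_total (p ^ Nat.log p k) (q ^ Nat.log q k) with h | h
  · exact main p q hp hq hne hpk' hqk' hpd3 hqd3 h
  · exact main q p hq hp (Ne.symm hne) hqk' hpk' hqd3 hpd3 h
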